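/- Suppose f : Δ = [a,b] × [c,d] → ℝ is convex on the co-ordinates and integrable, and define H(t,s) = (1/((b-a)(d-c))) ∫_a^b ∫_c^d f(tx + (1-t)(a+b)/2, sy + (1-s)(c+d)/2) dx dy for (t,s) ∈ [0,1]². Then H is convex on the co-ordinates on [0,1]². -/

import Mathlib

open MeasureTheory

def CoordConvexOn (a b c d : ℝ) (f : ℝ → ℝ → ℝ) : Prop :=
  (∀ y ∈ Set.Icc c d, ConvexOn ℝ (Set.Icc a b) (fun x => f x y)) ∧
  (∀ x ∈ Set.Icc a b, ConvexOn ℝ (Set.Icc c d) (fun y => f x y))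

/-- The Dragomir mapping `H` associated to `f` on `[a,b] × [c,d]`. -/
noncomputable def Hmap (a b c d : ℝ) (f : ℝ → ℝ → ℝ) (t s : ℝ) : ℝ :=
  (1 / ((b - a) * (d - c))) *
    ∫ x in a..b, ∫ y in c..d,
      f (t * x + (1 - t) * (a + b) / 2) (s * y + (1 - s) * (c + d) / 2)

/-- A convex function on a closed interval is interval integrable. -/
lemma convexOn_intervalIntegrable {p q : ℝ} (hpq : p < q) {g : ℝ → ℝ}
    (hg : ConvexOn ℝ (Set.Icc p q) g) : IntervalIntegrable g MeasureTheory.volume p q := by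
  rw [intervalIntegrable_iff_integrableOn_Icc_of_le hpq.le,
    integrableOn_Icc_iff_integrableOn_Ioo]
  have hcont : ContinuousOn g (Set.Ioo p q) :=
    (hg.subset Set.Ioo_subset_Icc_self (convex_Ioo p q)).continuousOn isOpen_Ioo
  set M := max (g p) (g q) with hM
  set C := max M (M - 2 * g ((p + q) / 2)) with hCdef
  have hbound : ∀ y ∈ Set.Ioo p q, |g y| ≤ C := by
    intro y hy
    have hyI : y ∈ Set.Icc p q := Set.Ioo_subset_Icc_self hy
    have hy' : p + q - y ∈ Set.Icc p q := ⟨by linarith [hy.2], by linarith [hy.1]⟩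
    have hub : g y ≤ M := by
      have hseg : y ∈ segment ℝ p q := by rw [segment_eq_Icc hpq.le]; exact hyI
      exact hg.le_on_segment (Set.left_mem_Icc.2 hpq.le) (Set.right_mem_Icc.2 hpq.le) hseg
    have hub' : g (p + q - y) ≤ M := by
      have hseg : p + q - y ∈ segment ℝ p q := by rw [segment_eq_Icc hpq.le]; exact hy'
      exact hg.le_on_segment (Set.left_mem_Icc.2 hpq.le) (Set.right_mem_Icc.2 hpq.le) hseg
    have hlb : 2 * g ((p + q) / 2) - g (p + q - y) ≤ g y := by
      have h2 := hg.2 hyI hy' (by norm_num : (0:ℝ) ≤ 1/2) (by norm_num : (0:ℝ) ≤ 1/2)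
        (by norm_num : (1/2 : ℝ) + 1/2 = 1)
      simp only [smul_eq_mul] at h2
      have he : (1/2 : ℝ) * y + (1/2) * (p + q - y) = (p + q) / 2 := by ring
      rw [he] at h2; linarith
    rw [abs_le]
    constructor
    · have h1 : M - 2 * g ((p + q) / 2) ≤ C := le_max_right _ _
      linarith
    · exact hub.trans (le_max_left _ _)
  have hCint : IntegrableOn (fun _ : ℝ => C) (Set.Ioo p q) MeasureTheory.volume :=
    integrableOn_const measure_Ioo_lt_top.ne
  refine Integrable.mono' hCint (hcont.aestronglyMeasurable measurableSet_Ioo) ?_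
  refine (ae_restrict_iff' measurableSet_Ioo).2 (Filter.Eventually.of_forall ?_)
  intro y hy
  simpa [Real.norm_eq_abs] using hbound y hy

lemma mem_midIcc {p q t x : ℝ} (ht0 : 0 ≤ t) (ht1 : t ≤ 1) (hx : x ∈ Set.Icc p q) :
    t * x + (1 - t) * (p + q) / 2 ∈ Set.Icc p q := by
  obtain ⟨h1, h2⟩ := hx
  constructor
  · nlinarith [mul_nonneg ht0 (sub_nonneg.2 h1), mul_nonneg (sub_nonneg.2 ht1) (sub_nonneg.2 (h1.trans h2))]
  · nlinarith [mul_nonneg ht0 (sub_nonneg.2 h2), mul_nonneg (sub_nonneg.2 ht1) (sub_nonneg.2 (h1.trans h2))]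

lemma comp_mid_convexOn {p q s : ℝ} (hs0 : 0 ≤ s) (hs1 : s ≤ 1) {φ : ℝ → ℝ}
    (hφ : ConvexOn ℝ (Set.Icc p q) φ) :
    ConvexOn ℝ (Set.Icc p q) (fun y => φ (s * y + (1 - s) * (p + q) / 2)) := by
  refine ⟨convex_Icc p q, fun y₁ h₁ y₂ h₂ α β hα hβ hαβ => ?_⟩
  simp only [smul_eq_mul]
  have e : s * (α * y₁ + β * y₂) + (1 - s) * (p + q) / 2
      = α * (s * y₁ + (1 - s) * (p + q) / 2) + β * (s * y₂ + (1 - s) * (p + q) / 2) := by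
    have hβ' : β = 1 - α := by linarith
    rw [hβ']; ring
  rw [e]
  have := hφ.2 (mem_midIcc hs0 hs1 h₁) (mem_midIcc hs0 hs1 h₂) hα hβ hαβ
  simpa using this

lemma integral_comb_le {p q α β : ℝ} (hpq : p ≤ q) {g g1 g2 : ℝ → ℝ}
    (h0 : IntervalIntegrable g MeasureTheory.volume p q)
    (h1 : IntervalIntegrable g1 MeasureTheory.volume p q)
    (h2 : IntervalIntegrable g2 MeasureTheory.volume p q)
    (hle : ∀ y ∈ Set.Icc p q, g y ≤ α * g1 y + β * g2 y) :
    ∫ y in p..q, g y ≤ α * (∫ y in p..q, g1 y) + β * (∫ y in p..q, g2 y) := by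
  have h12 : IntervalIntegrable (fun y => α * g1 y + β * g2 y) MeasureTheory.volume p q :=
    (h1.const_mul α).add (h2.const_mul β)
  calc ∫ y in p..q, g y ≤ ∫ y in p..q, (α * g1 y + β * g2 y) :=
        intervalIntegral.integral_mono_on hpq h0 h12 hle
    _ = α * (∫ y in p..q, g1 y) + β * (∫ y in p..q, g2 y) := by
        rw [intervalIntegral.integral_add (h1.const_mul α) (h2.const_mul β),
          intervalIntegral.integral_const_mul, intervalIntegral.integral_const_mul]

lemma mul_comb_aux (C α β I1 I2 : ℝ) :
    C * (α * I1 + β * I2) = α * (C * I1) + β * (C * I2) := by ring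

theorem stmt13 (a b c d : ℝ) (hab : a < b) (hcd : c < d) (f : ℝ → ℝ → ℝ)
    (hf : CoordConvexOn a b c d f)
    (hint : IntegrableOn (fun q : ℝ × ℝ => f q.1 q.2) (Set.Icc a b ×ˢ Set.Icc c d)) :
    CoordConvexOn 0 1 0 1 (Hmap a b c d f) := by
  obtain ⟨hf1, hf2⟩ := hf
  have hC : (0:ℝ) < 1 / ((b - a) * (d - c)) :=
    one_div_pos.2 (mul_pos (sub_pos.2 hab) (sub_pos.2 hcd))
  -- inner slice integrability
  have hIy : ∀ t ∈ Set.Icc (0:ℝ) 1, ∀ s ∈ Set.Icc (0:ℝ) 1, ∀ x ∈ Set.Icc a b,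
      IntervalIntegrable
        (fun y => f (t * x + (1 - t) * (a + b) / 2) (s * y + (1 - s) * (c + d) / 2))
        MeasureTheory.volume c d := by
    intro t ht s hs x hx
    exact convexOn_intervalIntegrable hcd
      (comp_mid_convexOn hs.1 hs.2 (hf2 _ (mem_midIcc ht.1 ht.2 hx)))
  -- convexity of the inner integral in x, hence integrability in x
  have hJconv : ∀ t ∈ Set.Icc (0:ℝ) 1, ∀ s ∈ Set.Icc (0:ℝ) 1,
      ConvexOn ℝ (Set.Icc a b)
        (fun x => ∫ y in c..d, f (t * x + (1 - t) * (a + b) / 2)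
          (s * y + (1 - s) * (c + d) / 2)) := by
    intro t ht s hs
    refine ⟨convex_Icc a b, fun x₁ h₁ x₂ h₂ γ δ hγ hδ hγδ => ?_⟩
    simp only [smul_eq_mul]
    have hx' : γ * x₁ + δ * x₂ ∈ Set.Icc a b := by
      have := (convex_Icc a b) h₁ h₂ hγ hδ hγδ
      simpa using this
    refine integral_comb_le hcd.le (hIy t ht s hs _ hx') (hIy t ht s hs _ h₁)
      (hIy t ht s hs _ h₂) ?_
    intro y hy
    have e : t * (γ * x₁ + δ * x₂) + (1 - t) * (a + b) / 2
        = γ * (t * x₁ + (1 - t) * (a + b) / 2) + δ * (t * x₂ + (1 - t) * (a + b) / 2) := by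
      have hδ' : δ = 1 - γ := by linarith
      rw [hδ']; ring
    rw [e]
    have := (hf1 _ (mem_midIcc hs.1 hs.2 hy)).2 (mem_midIcc ht.1 ht.2 h₁)
      (mem_midIcc ht.1 ht.2 h₂) hγ hδ hγδ
    simpa using this
  have hIx : ∀ t ∈ Set.Icc (0:ℝ) 1, ∀ s ∈ Set.Icc (0:ℝ) 1,
      IntervalIntegrable
        (fun x => ∫ y in c..d, f (t * x + (1 - t) * (a + b) / 2)
          (s * y + (1 - s) * (c + d) / 2)) MeasureTheory.volume a b :=
    fun t ht s hs => convexOn_intervalIntegrable hab (hJconv t ht s hs)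
  constructor
  · -- convex in t for fixed s
    intro s hs
    refine ⟨convex_Icc 0 1, fun t₁ ht₁ t₂ ht₂ α β hα hβ hαβ => ?_⟩
    simp only [smul_eq_mul, Hmap]
    have ht : α * t₁ + β * t₂ ∈ Set.Icc (0:ℝ) 1 := by
      have := (convex_Icc (0:ℝ) 1) ht₁ ht₂ hα hβ hαβ
      simpa using this
    have hinner : ∀ x ∈ Set.Icc a b,
        (∫ y in c..d, f ((α * t₁ + β * t₂) * x + (1 - (α * t₁ + β * t₂)) * (a + b) / 2)
          (s * y + (1 - s) * (c + d) / 2))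
        ≤ α * (∫ y in c..d, f (t₁ * x + (1 - t₁) * (a + b) / 2)
            (s * y + (1 - s) * (c + d) / 2))
          + β * (∫ y in c..d, f (t₂ * x + (1 - t₂) * (a + b) / 2)
            (s * y + (1 - s) * (c + d) / 2)) := by
      intro x hx
      refine integral_comb_le hcd.le (hIy _ ht s hs x hx) (hIy t₁ ht₁ s hs x hx)
        (hIy t₂ ht₂ s hs x hx) ?_
      intro y hy
      have e : (α * t₁ + β * t₂) * x + (1 - (α * t₁ + β * t₂)) * (a + b) / 2
          = α * (t₁ * x + (1 - t₁) * (a + b) / 2) + β * (t₂ * x + (1 - t₂) * (a + b) / 2) := by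
        have hβ' : β = 1 - α := by linarith
        rw [hβ']; ring
      rw [e]
      have := (hf1 _ (mem_midIcc hs.1 hs.2 hy)).2 (mem_midIcc ht₁.1 ht₁.2 hx)
        (mem_midIcc ht₂.1 ht₂.2 hx) hα hβ hαβ
      simpa using this
    have houter := integral_comb_le hab.le (hIx _ ht s hs) (hIx t₁ ht₁ s hs)
      (hIx t₂ ht₂ s hs) hinner
    have hfin := mul_le_mul_of_nonneg_left houter hC.le
    exact hfin.trans (le_of_eq (mul_comb_aux _ _ _ _ _))
  · -- convex in s for fixed t
    intro t ht
    refine ⟨convex_Icc 0 1, fun s₁ hs₁ s₂ hs₂ α β hα hβ hαβ => ?_⟩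
    simp only [smul_eq_mul, Hmap]
    have hs : α * s₁ + β * s₂ ∈ Set.Icc (0:ℝ) 1 := by
      have := (convex_Icc (0:ℝ) 1) hs₁ hs₂ hα hβ hαβ
      simpa using this
    have hinner : ∀ x ∈ Set.Icc a b,
        (∫ y in c..d, f (t * x + (1 - t) * (a + b) / 2)
          ((α * s₁ + β * s₂) * y + (1 - (α * s₁ + β * s₂)) * (c + d) / 2))
        ≤ α * (∫ y in c..d, f (t * x + (1 - t) * (a + b) / 2)
            (s₁ * y + (1 - s₁) * (c + d) / 2))
          + β * (∫ y in c..d, f (t * x + (1 - t) * (a + b) / 2)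
            (s₂ * y + (1 - s₂) * (c + d) / 2)) := by
      intro x hx
      refine integral_comb_le hcd.le (hIy t ht _ hs x hx) (hIy t ht s₁ hs₁ x hx)
        (hIy t ht s₂ hs₂ x hx) ?_
      intro y hy
      have e : (α * s₁ + β * s₂) * y + (1 - (α * s₁ + β * s₂)) * (c + d) / 2
          = α * (s₁ * y + (1 - s₁) * (c + d) / 2) + β * (s₂ * y + (1 - s₂) * (c + d) / 2) := by
        have hβ' : β = 1 - α := by linarith
        rw [hβ']; ring
      rw [e]
      have := (hf2 _ (mem_midIcc ht.1 ht.2 hx)).2 (mem_midIcc hs₁.1 hs₁.2 hy)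
        (mem_midIcc hs₂.1 hs₂.2 hy) hα hβ hαβ
      simpa using this
    have houter := integral_comb_le hab.le (hIx t ht _ hs) (hIx t ht s₁ hs₁)
      (hIx t ht s₂ hs₂) hinner
    have hfin := mul_le_mul_of_nonneg_left houter hC.le
    exact hfin.trans (le_of_eq (mul_comb_aux _ _ _ _ _))
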